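/- arXiv:2207.02568 — 3 statements merged into one kernel-verified Lean document; each statement's English description precedes it below -/
import Mathlib

section
/- Let θ ∈ ℝ and let f : ℝ → ℂ be continuous with compact support contained in (0, ∞). Then ∫_{t ∈ ℝ} ‖M f(−θ + i·t)‖² dt = 2π · ∫_{x ∈ (0, ∞)} ‖f(x)‖² · x^{−2θ−1} dx. In other words, up to the factor √(2π), the Mellin transform is an isometry from the weighted space x^θ L²((0,∞), dx/x) into L² of the vertical line Γ_{−θ} = {ζ ∈ ℂ : Re ζ = −θ}. -/
open MeasureTheory Set

open Complex Real Filter Convolution Module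
open scoped FourierTransform RealInnerProductSpace Topology

noncomputable def eker (ξ v : ℝ) : ℂ := Complex.exp ((-2 * π * v * ξ : ℝ) * Complex.I)

lemma eker_add (ξ x t : ℝ) : eker ξ (x + t) = eker ξ x * eker ξ t := by
  rw [eker, eker, eker, ← Complex.exp_add]
  congr 1
  push_cast
  ring

lemma eker_cont (ξ : ℝ) : Continuous (eker ξ) := by
  unfold eker; fun_prop

lemma fourier_eq_cexp (f : ℝ → ℂ) (ξ : ℝ) :
    𝓕 f ξ = ∫ v : ℝ, eker ξ v * f v := by
  rw [Real.fourier_eq']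
  congr 1 with v
  rw [smul_eq_mul, eker]
  congr 2
  simp only [RCLike.inner_apply, starRingEnd_apply, star_trivial]
  push_cast
  ring_nf

lemma fourier_convolution (g k : ℝ → ℂ) (hg : Continuous g) (hgs : HasCompactSupport g)
    (hk : Continuous k) (hks : HasCompactSupport k) (ξ : ℝ) :
    𝓕 (g ⋆[ContinuousLinearMap.mul ℂ ℂ] k) ξ = 𝓕 g ξ * 𝓕 k ξ := by
  have hΦ : Continuous (fun p : ℝ × ℝ => eker ξ p.1 * (g p.2 * k (p.1 - p.2))) := by
    apply ((eker_cont ξ).comp continuous_fst).mul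
    exact (hg.comp continuous_snd).mul (hk.comp (continuous_fst.sub continuous_snd))
  have hΦs : HasCompactSupport (fun p : ℝ × ℝ => eker ξ p.1 * (g p.2 * k (p.1 - p.2))) := by
    apply HasCompactSupport.intro ((hks.isCompact.add hgs.isCompact).prod hgs.isCompact)
    rintro ⟨x, t⟩ hxt
    by_contra h
    apply hxt
    have hgt : g t ≠ 0 := fun h0 => h (by simp [h0])
    have hkt : k (x - t) ≠ 0 := fun h0 => h (by simp [h0])
    refine ⟨⟨x - t, subset_tsupport _ hkt, t, subset_tsupport _ hgt, by ring⟩,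
      subset_tsupport _ hgt⟩
  have hΦi : Integrable (fun p : ℝ × ℝ => eker ξ p.1 * (g p.2 * k (p.1 - p.2)))
      (volume.prod volume) := by
    have := hΦ.integrable_of_hasCompactSupport (μ := (volume : Measure (ℝ × ℝ))) hΦs
    rwa [MeasureTheory.Measure.volume_eq_prod] at this
  calc 𝓕 (g ⋆[ContinuousLinearMap.mul ℂ ℂ] k) ξ
      = ∫ x : ℝ, ∫ t : ℝ, eker ξ x * (g t * k (x - t)) := by
        rw [fourier_eq_cexp]
        congr 1 with x
        rw [convolution_def, ← integral_const_mul]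
        rfl
    _ = ∫ t : ℝ, ∫ x : ℝ, eker ξ x * (g t * k (x - t)) := integral_integral_swap hΦi
    _ = ∫ t : ℝ, ∫ x : ℝ, eker ξ (x + t) * (g t * k x) := by
        congr 1 with t
        exact (integral_add_right_eq_self (fun x => eker ξ x * (g t * k (x - t))) t).symm.trans
          (by congr 1 with x; simp)
    _ = ∫ t : ℝ, (eker ξ t * g t) * ∫ x : ℝ, eker ξ x * k x := by
        congr 1 with t
        rw [← integral_const_mul]
        congr 1 with x
        rw [eker_add]
        ring
    _ = 𝓕 g ξ * 𝓕 k ξ := by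
        rw [integral_mul_const, fourier_eq_cexp, fourier_eq_cexp]

lemma fourier_conj_neg (g : ℝ → ℂ) (ξ : ℝ) :
    𝓕 (fun x => (starRingEnd ℂ) (g (-x))) ξ = (starRingEnd ℂ) (𝓕 g ξ) := by
  rw [fourier_eq_cexp, fourier_eq_cexp, ← integral_conj]
  simp only [eker]
  rw [show (∫ v : ℝ, Complex.exp ((-2 * π * v * ξ : ℝ) * Complex.I) * (starRingEnd ℂ) (g (-v)))
      = ∫ v : ℝ, Complex.exp ((-2 * π * (-v) * ξ : ℝ) * Complex.I) * (starRingEnd ℂ) (g (-(-v)))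
      from (integral_neg_eq_self _ _).symm]
  simp only [neg_neg]
  congr 1 with v
  rw [map_mul, ← Complex.exp_conj, map_mul, Complex.conj_I, Complex.conj_ofReal]
  congr 2
  push_cast
  ring_nf

theorem plancherel_cc (g : ℝ → ℂ) (hg : Continuous g) (hgs : HasCompactSupport g) :
    Integrable (fun ξ : ℝ => ‖𝓕 g ξ‖ ^ 2) ∧
      ∫ ξ : ℝ, ‖𝓕 g ξ‖ ^ 2 = ∫ x : ℝ, ‖g x‖ ^ 2 := by
  have hgi : Integrable g := hg.integrable_of_hasCompactSupport hgs
  set k : ℝ → ℂ := fun x => (starRingEnd ℂ) (g (-x)) with hk_def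
  have hk : Continuous k := continuous_star.comp (hg.comp continuous_neg)
  have hks : HasCompactSupport k := by
    have h1 : HasCompactSupport (g ∘ Neg.neg) := hgs.comp_homeomorph (Homeomorph.neg ℝ)
    exact h1.comp_left (g := (starRingEnd ℂ)) (map_zero _)
  set h : ℝ → ℂ := g ⋆[ContinuousLinearMap.mul ℂ ℂ] k with hh_def
  have hh : Continuous h :=
    hks.continuous_convolution_right _ hgi.locallyIntegrable hk
  have hhs : HasCompactSupport h :=
    HasCompactSupport.convolution (L := ContinuousLinearMap.mul ℂ ℂ) hgs hks
  have hhi : Integrable h := hh.integrable_of_hasCompactSupport hhs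
  set F : ℝ → ℝ := fun ξ => ‖𝓕 g ξ‖ ^ 2 with hF_def
  have hFc : Continuous F := by
    have : Continuous (𝓕 g) :=
      VectorFourier.fourierIntegral_continuous Real.continuous_fourierChar continuous_inner hgi
    exact (this.norm).pow 2
  have hFnn : ∀ ξ, 0 ≤ F ξ := fun ξ => by positivity
  -- Fourier transform of h is F
  have hFh : ∀ ξ : ℝ, 𝓕 h ξ = ((F ξ : ℝ) : ℂ) := by
    intro ξ
    rw [hh_def, fourier_convolution g k hg hgs hk hks, hk_def, fourier_conj_neg,
      Complex.mul_conj]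
    norm_cast
    rw [hF_def]
    simp [Complex.normSq_eq_norm_sq]
  -- value of h at 0
  set I₀ : ℝ := ∫ x : ℝ, ‖g x‖ ^ 2 with hI₀
  have hh0 : h 0 = (I₀ : ℂ) := by
    have step : h 0 = ∫ t : ℝ, ((‖g t‖ ^ 2 : ℝ) : ℂ) := by
      rw [hh_def, convolution_def]
      congr 1 with t
      simp only [ContinuousLinearMap.mul_apply', hk_def, zero_sub, neg_neg]
      rw [Complex.mul_conj]
      norm_cast
      simp [Complex.normSq_eq_norm_sq]
    rw [step, hI₀]
    exact integral_ofReal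
  -- Gaussian-smoothed limit
  have A : Tendsto (fun c : ℝ =>
      ∫ w : ℝ, ((π * c : ℂ) ^ (finrank ℝ ℝ / 2 : ℂ) *
        Complex.exp (-π ^ 2 * c * ‖(0:ℝ) - w‖ ^ 2)) • h w) atTop (𝓝 (h 0)) :=
    Real.tendsto_integral_gaussian_smul' hhi hh.continuousAt
  have flip_inner : (innerₗ ℝ).flip = innerₗ ℝ :=
    LinearMap.ext fun x => LinearMap.ext fun y => real_inner_comm x y
  have E : ∀ c : ℝ, 0 < c →
      (∫ w : ℝ, ((π * c : ℂ) ^ (finrank ℝ ℝ / 2 : ℂ) *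
          Complex.exp (-π ^ 2 * c * ‖(0:ℝ) - w‖ ^ 2)) • h w)
        = ∫ ξ : ℝ, Complex.exp (-((c⁻¹ : ℝ) : ℂ) * ‖ξ‖ ^ 2) • 𝓕 h ξ := by
    intro c hc
    have hb : 0 < (((c⁻¹ : ℝ) : ℂ)).re := by simpa using inv_pos.2 hc
    have J : Integrable (fun v : ℝ => Complex.exp (-((c⁻¹ : ℝ) : ℂ) * ‖v‖ ^ 2)) := by
      simpa using GaussianFourier.integrable_cexp_neg_mul_sq_norm_add (V := ℝ) hb 0 0
    have gauss : ∀ w : ℝ, 𝓕 (fun v : ℝ => Complex.exp (-((c⁻¹ : ℝ) : ℂ) * ‖v‖ ^ 2)) w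
        = (π * c : ℂ) ^ (finrank ℝ ℝ / 2 : ℂ) *
          Complex.exp (-π ^ 2 * c * ‖(0:ℝ) - w‖ ^ 2) := by
      intro w
      rw [fourier_gaussian_innerProductSpace hb w]
      have hc0 : ((c : ℂ)) ≠ 0 := by exact_mod_cast hc.ne'
      congr 1
      · congr 1
        push_cast
        field_simp
      · congr 1
        simp only [zero_sub, norm_neg]
        push_cast
        field_simp
    calc (∫ w : ℝ, ((π * c : ℂ) ^ (finrank ℝ ℝ / 2 : ℂ) *
          Complex.exp (-π ^ 2 * c * ‖(0:ℝ) - w‖ ^ 2)) • h w)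
        = ∫ w : ℝ, (𝓕 (fun v : ℝ => Complex.exp (-((c⁻¹ : ℝ) : ℂ) * ‖v‖ ^ 2)) w) • h w := by
          congr 1 with w
          rw [gauss w]
      _ = ∫ ξ : ℝ, Complex.exp (-((c⁻¹ : ℝ) : ℂ) * ‖ξ‖ ^ 2) • 𝓕 h ξ := by
          have := VectorFourier.integral_fourierIntegral_smul_eq_flip (L := innerₗ ℝ)
            Real.continuous_fourierChar continuous_inner J hhi
          rw [flip_inner] at this
          exact this
  have T1 : Tendsto (fun c : ℝ => ∫ ξ : ℝ, Complex.exp (-((c⁻¹ : ℝ) : ℂ) * ‖ξ‖ ^ 2) • 𝓕 h ξ)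
      atTop (𝓝 ((I₀ : ℂ))) := by
    rw [← hh0]
    apply A.congr'
    filter_upwards [Ioi_mem_atTop (0:ℝ)] with c hc
    exact E c hc
  -- realify
  have real_eq : ∀ c : ℝ, (∫ ξ : ℝ, Complex.exp (-((c⁻¹ : ℝ) : ℂ) * ‖ξ‖ ^ 2) • 𝓕 h ξ)
      = ((∫ ξ : ℝ, Real.exp (-c⁻¹ * ξ ^ 2) * F ξ : ℝ) : ℂ) := by
    intro c
    calc (∫ ξ : ℝ, Complex.exp (-((c⁻¹ : ℝ) : ℂ) * ‖ξ‖ ^ 2) • 𝓕 h ξ)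
        = ∫ ξ : ℝ, ((Real.exp (-c⁻¹ * ξ ^ 2) * F ξ : ℝ) : ℂ) := by
          congr 1 with ξ
          rw [hFh ξ, smul_eq_mul]
          have hnn : ((‖ξ‖ : ℂ)) ^ 2 = ((ξ : ℂ)) ^ 2 := by
            norm_cast
            exact sq_abs ξ
          push_cast
          rw [hnn]
      _ = _ := integral_ofReal
  -- the approximating sequence
  set a : ℕ → ℝ := fun n => ∫ ξ : ℝ, Real.exp (-((n : ℝ) + 1)⁻¹ * ξ ^ 2) * F ξ with ha_def
  have hseq : Tendsto (fun n : ℕ => ((n : ℝ) + 1)) atTop atTop :=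
    tendsto_atTop_add_const_right _ 1 tendsto_natCast_atTop_atTop
  have T2 : Tendsto a atTop (𝓝 I₀) := by
    have T1' : Tendsto (fun n : ℕ => ((a n : ℝ) : ℂ)) atTop (𝓝 ((I₀ : ℂ))) := by
      have h0 := T1.comp hseq
      apply h0.congr
      intro n
      simp only [Function.comp]
      rw [real_eq]
    have h1 := (Complex.continuous_re.tendsto _).comp T1'
    simpa [Function.comp_def] using h1
  have hmono : ∀ ξ : ℝ, Monotone fun n : ℕ => Real.exp (-((n : ℝ) + 1)⁻¹ * ξ ^ 2) * F ξ := by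
    intro ξ m n hmn
    apply mul_le_mul_of_nonneg_right _ (hFnn ξ)
    apply Real.exp_le_exp.2
    rw [neg_mul, neg_mul, neg_le_neg_iff]
    apply mul_le_mul_of_nonneg_right _ (sq_nonneg ξ)
    apply inv_anti₀ (by positivity)
    have : (m : ℝ) ≤ n := Nat.cast_le.2 hmn
    linarith
  have htend : ∀ ξ : ℝ, Tendsto (fun n : ℕ => Real.exp (-((n : ℝ) + 1)⁻¹ * ξ ^ 2) * F ξ)
      atTop (𝓝 (F ξ)) := by
    intro ξ
    have h1 : Tendsto (fun n : ℕ => -((n : ℝ) + 1)⁻¹ * ξ ^ 2) atTop (𝓝 0) := by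
      have h2 := (hseq.inv_tendsto_atTop).neg
      have h3 := h2.mul_const (ξ ^ 2)
      simpa using h3
    have h4 := (Real.continuous_exp.tendsto 0).comp h1
    simp only [Real.exp_zero] at h4
    have h5 := h4.mul_const (F ξ)
    simpa using h5
  -- boundedness of F and integrability of the approximants
  set M : ℝ := ∫ x : ℝ, ‖g x‖ with hM
  have hFb : ∀ ξ : ℝ, F ξ ≤ M ^ 2 := by
    intro ξ
    have : ‖𝓕 g ξ‖ ≤ M :=
      VectorFourier.norm_fourierIntegral_le_integral_norm _ _ _ _ _
    calc F ξ = ‖𝓕 g ξ‖ ^ 2 := rfl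
      _ ≤ M ^ 2 := by
          apply pow_le_pow_left₀ (norm_nonneg _) this
  have hint : ∀ n : ℕ,
      Integrable (fun ξ : ℝ => Real.exp (-((n : ℝ) + 1)⁻¹ * ξ ^ 2) * F ξ) := by
    intro n
    have hb : (0:ℝ) < ((n : ℝ) + 1)⁻¹ := by positivity
    have hcont : Continuous (fun ξ : ℝ => Real.exp (-((n : ℝ) + 1)⁻¹ * ξ ^ 2) * F ξ) := by
      apply Continuous.mul _ hFc
      apply Real.continuous_exp.comp
      fun_prop
    apply Integrable.mono' ((integrable_exp_neg_mul_sq hb).const_mul (M ^ 2))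
      hcont.aestronglyMeasurable
    filter_upwards with ξ
    rw [Real.norm_eq_abs, _root_.abs_of_nonneg (by positivity)]
    calc Real.exp (-((n : ℝ) + 1)⁻¹ * ξ ^ 2) * F ξ
        ≤ Real.exp (-((n : ℝ) + 1)⁻¹ * ξ ^ 2) * M ^ 2 :=
          mul_le_mul_of_nonneg_left (hFb ξ) (Real.exp_pos _).le
      _ = M ^ 2 * Real.exp (-((n : ℝ) + 1)⁻¹ * ξ ^ 2) := mul_comm _ _
  have meas_n : ∀ n : ℕ, AEMeasurable
      (fun ξ : ℝ => ENNReal.ofReal (Real.exp (-((n : ℝ) + 1)⁻¹ * ξ ^ 2) * F ξ)) volume :=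
    fun n => ((hint n).aestronglyMeasurable.aemeasurable).ennreal_ofReal
  have lneq : ∀ n : ℕ,
      (∫⁻ ξ : ℝ, ENNReal.ofReal (Real.exp (-((n : ℝ) + 1)⁻¹ * ξ ^ 2) * F ξ))
        = ENNReal.ofReal (a n) := by
    intro n
    exact (ofReal_integral_eq_lintegral_ofReal (hint n)
      (Filter.Eventually.of_forall fun ξ => by positivity)).symm
  have key : (∫⁻ ξ : ℝ, ENNReal.ofReal (F ξ)) = ENNReal.ofReal I₀ := by
    have h1 : (∫⁻ ξ : ℝ, ENNReal.ofReal (F ξ))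
        = ⨆ n : ℕ, ∫⁻ ξ : ℝ, ENNReal.ofReal (Real.exp (-((n : ℝ) + 1)⁻¹ * ξ ^ 2) * F ξ) := by
      rw [← lintegral_iSup' meas_n (Filter.Eventually.of_forall fun ξ m n hmn =>
        ENNReal.ofReal_le_ofReal (hmono ξ hmn))]
      congr 1 with ξ
      exact tendsto_nhds_unique (ENNReal.tendsto_ofReal (htend ξ))
        (tendsto_atTop_iSup fun m n hmn => ENNReal.ofReal_le_ofReal (hmono ξ hmn))
    have amono : Monotone fun n : ℕ => ENNReal.ofReal (a n) := by
      intro m n hmn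
      apply ENNReal.ofReal_le_ofReal
      exact integral_mono (hint m) (hint n) fun ξ => hmono ξ hmn
    have h2 : (⨆ n : ℕ, ENNReal.ofReal (a n)) = ENNReal.ofReal I₀ :=
      tendsto_nhds_unique (tendsto_atTop_iSup amono) (ENNReal.tendsto_ofReal T2)
    rw [h1]
    simp_rw [lneq]
    exact h2
  have hI₀nn : 0 ≤ I₀ := integral_nonneg fun x => by positivity
  have hInt : Integrable F := by
    refine ⟨hFc.aestronglyMeasurable, ?_⟩
    rw [hasFiniteIntegral_iff_ofReal (Filter.Eventually.of_forall hFnn), key]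
    exact ENNReal.ofReal_lt_top
  refine ⟨hInt, ?_⟩
  rw [show (∫ ξ : ℝ, ‖𝓕 g ξ‖ ^ 2) = ∫ ξ : ℝ, F ξ from rfl,
    integral_eq_lintegral_of_nonneg_ae (Filter.Eventually.of_forall hFnn)
      hFc.aestronglyMeasurable]
  rw [key, ENNReal.toReal_ofReal hI₀nn]

private theorem rexp_neg_deriv_aux' :
    ∀ x ∈ (univ : Set ℝ), HasDerivWithinAt (rexp ∘ Neg.neg) (-rexp (-x)) univ x :=
  fun x _ ↦ mul_neg_one (rexp (-x)) ▸
    ((Real.hasDerivAt_exp (-x)).comp x (hasDerivAt_neg x)).hasDerivWithinAt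

private theorem rexp_neg_image_aux' : rexp ∘ Neg.neg '' univ = Ioi 0 := by
  rw [Set.image_comp, Set.image_univ_of_surjective neg_surjective, Set.image_univ, Real.range_exp]

private theorem rexp_neg_injOn_aux' : (univ : Set ℝ).InjOn (rexp ∘ Neg.neg) :=
  Real.exp_injective.injOn.comp neg_injective.injOn (univ.mapsTo_univ _)


/-- Mellin–Plancherel isometry on the vertical line `Γ_{-θ}`:
for continuous `f` compactly supported in `(0,∞)`,
`∫ ‖M f(-θ + i t)‖² dt = 2π ∫_{(0,∞)} ‖f x‖² x^{-2θ-1} dx`. -/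
theorem mellin_plancherel_line (θ : ℝ) (f : ℝ → ℂ) (hf : Continuous f)
    (hsupp : HasCompactSupport f) (hpos : tsupport f ⊆ Set.Ioi (0 : ℝ)) :
    ∫ t : ℝ, ‖mellin f ((-θ : ℂ) + t * Complex.I)‖ ^ 2 =
      (2 * Real.pi) * ∫ x in Set.Ioi (0 : ℝ), ‖f x‖ ^ 2 * x ^ (-2 * θ - 1) := by
  set G : ℝ → ℂ := fun u => Real.exp (θ * u) • f (Real.exp (-u)) with hG_def
  have hGc : Continuous G := by
    apply Continuous.smul (f := fun u : ℝ => Real.exp (θ * u)) (g := fun u : ℝ => f (Real.exp (-u))) _ (hf.comp (Real.continuous_exp.comp continuous_neg))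
    fun_prop
  have hGs : HasCompactSupport G := by
    have hK : IsCompact ((fun x : ℝ => -Real.log x) '' tsupport f) := by
      apply hsupp.image_of_continuousOn
      apply ContinuousOn.neg
      apply Real.continuousOn_log.mono
      intro x hx
      exact ne_of_gt (hpos hx)
    apply HasCompactSupport.intro hK
    intro u hu
    have hf0 : f (Real.exp (-u)) = 0 := by
      by_contra h0
      apply hu
      refine ⟨Real.exp (-u), subset_tsupport _ h0, ?_⟩
      simp [Real.log_exp]
    simp [hG_def, hf0]
  -- Mellin transform as Fourier transform
  have hmellin : ∀ t : ℝ, mellin f ((-θ : ℂ) + t * Complex.I) = 𝓕 G (t / (2 * π)) := by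
    intro t
    rw [mellin_eq_fourier]
    have hre : ((-θ : ℂ) + t * Complex.I).re = -θ := by simp
    have him : ((-θ : ℂ) + t * Complex.I).im = t := by simp
    rw [hre, him, neg_neg]
  -- substitution x = exp (-u) for the right-hand side
  have hsub : (∫ x in Set.Ioi (0 : ℝ), ‖f x‖ ^ 2 * x ^ (-2 * θ - 1))
      = ∫ u : ℝ, ‖G u‖ ^ 2 := by
    rw [← rexp_neg_image_aux', integral_image_eq_integral_abs_deriv_smul
      MeasurableSet.univ rexp_neg_deriv_aux' rexp_neg_injOn_aux'
      (fun x : ℝ => ‖f x‖ ^ 2 * x ^ (-2 * θ - 1))]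
    rw [Measure.restrict_univ]
    congr 1 with u
    simp only [Function.comp_apply, abs_neg, _root_.abs_of_pos (Real.exp_pos (-u)),
      smul_eq_mul]
    rw [Real.rpow_def_of_pos (Real.exp_pos (-u)), Real.log_exp]
    rw [hG_def]
    rw [norm_smul, mul_pow, Real.norm_eq_abs, _root_.abs_of_pos (Real.exp_pos (θ * u)),
      ← Real.exp_one_rpow (θ * u)]
    rw [show (Real.exp 1 ^ (θ * u)) ^ 2 = Real.exp (2 * (θ * u)) by
      rw [← Real.rpow_natCast (Real.exp 1 ^ (θ * u)) 2, ← Real.rpow_mul (Real.exp_pos 1).le,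
        Real.exp_one_rpow]
      norm_num
      ring_nf]
    rw [show rexp (2 * (θ * u)) = rexp (-u) * rexp (-u * (-2 * θ - 1)) from by
      rw [← Real.exp_add]; congr 1; ring]
    ring
  calc ∫ t : ℝ, ‖mellin f ((-θ : ℂ) + t * Complex.I)‖ ^ 2
      = ∫ t : ℝ, ‖𝓕 G (t / (2 * π))‖ ^ 2 := by
        congr 1 with t
        rw [hmellin t]
    _ = |2 * π| • ∫ τ : ℝ, ‖𝓕 G τ‖ ^ 2 :=
        Measure.integral_comp_div (fun τ => ‖𝓕 G τ‖ ^ 2) (2 * π)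
    _ = (2 * π) * ∫ τ : ℝ, ‖𝓕 G τ‖ ^ 2 := by
        rw [smul_eq_mul, _root_.abs_of_pos (by positivity)]
    _ = (2 * π) * ∫ u : ℝ, ‖G u‖ ^ 2 := by
        rw [(plancherel_cc G hGc hGs).2]
    _ = (2 * π) * ∫ x in Set.Ioi (0 : ℝ), ‖f x‖ ^ 2 * x ^ (-2 * θ - 1) := by
        rw [hsub]
end

section
/- Let θ ∈ ℝ and let f : ℝ → ℂ be measurable with f(x) = 0 for all x ∉ (0,1], and suppose C² := ∫_{x ∈ (0,∞)} ‖f(x)‖² · x^{−2θ−1} dx < ∞. Then for every s ∈ ℂ with Re s > −θ, the Mellin integrand x ↦ x^{s−1} f(x) is integrable on (0,∞), and the Mellin transform satisfies the bound ‖M f(s)‖ ≤ (2(Re s + θ))^{−1/2} · C. -/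
open MeasureTheory Set

/-- If `f` is measurable, supported in `(0,1]`, and lies in the weighted space
`x^θ L²((0,∞), dx/x)` with norm `C`, then for `Re s > -θ` the Mellin integrand is
integrable and `‖M f(s)‖ ≤ (2(Re s + θ))^{-1/2} C`. -/
theorem mellin_bound_of_weighted_L2 (θ : ℝ) (f : ℝ → ℂ) (hmeas : Measurable f)
    (hsupp : ∀ x : ℝ, x ∉ Set.Ioc (0 : ℝ) 1 → f x = 0)
    (hint : IntegrableOn (fun x : ℝ => ‖f x‖ ^ 2 * x ^ (-2 * θ - 1)) (Set.Ioi 0)) :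
    ∀ s : ℂ, -θ < s.re →
      MellinConvergent f s ∧
      ‖mellin f s‖ ≤ (2 * (s.re + θ)) ^ (-(1 / 2) : ℝ) *
        Real.sqrt (∫ x in Set.Ioi (0 : ℝ), ‖f x‖ ^ 2 * x ^ (-2 * θ - 1)) := by
  intro s hs
  set a : ℝ := s.re + θ with ha_def
  have ha : 0 < a := by rw [ha_def]; linarith
  set μ := volume.restrict (Set.Ioi (0 : ℝ)) with hμ
  set g : ℝ → ℂ := fun x => (x : ℂ) ^ (s - 1) • f x with hg_def
  have hgm : AEStronglyMeasurable g μ := by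
    refine AEStronglyMeasurable.smul (𝕜 := ℂ) ?_ hmeas.aestronglyMeasurable
    refine ContinuousOn.aestronglyMeasurable ?_ measurableSet_Ioi
    intro x hx
    exact (Complex.continuousAt_ofReal_cpow_const x (s - 1)
      (Or.inr (ne_of_gt hx))).continuousWithinAt
  set U : ℝ → ENNReal := fun x =>
    (Set.Ioc (0 : ℝ) 1).indicator (fun x => ENNReal.ofReal (x ^ (a - 1 / 2))) x with hU_def
  set V : ℝ → ENNReal := fun x => ENNReal.ofReal (x ^ (-θ - 1 / 2) * ‖f x‖) with hV_def
  have hrpow : ∀ c : ℝ, AEMeasurable (fun x : ℝ => x ^ c) μ := by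
    intro c
    refine ContinuousOn.aemeasurable ?_ measurableSet_Ioi
    intro x hx
    exact (Real.continuousAt_rpow_const x c (Or.inl (ne_of_gt hx))).continuousWithinAt
  have hUm : AEMeasurable U μ := by
    refine AEMeasurable.indicator ?_ measurableSet_Ioc
    exact ENNReal.measurable_ofReal.comp_aemeasurable (hrpow _)
  have hVm : AEMeasurable V μ :=
    ENNReal.measurable_ofReal.comp_aemeasurable ((hrpow _).mul hmeas.norm.aemeasurable)
  -- pointwise splitting of the norm of the integrand
  have hUV : ∀ᵐ x ∂μ, ENNReal.ofReal ‖g x‖ = U x * V x := by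
    rw [hμ]
    filter_upwards [ae_restrict_mem measurableSet_Ioi] with x hx
    by_cases hx1 : x ∈ Set.Ioc (0 : ℝ) 1
    · have hxpos : (0 : ℝ) < x := hx
      have h1 : ‖g x‖ = x ^ (s.re - 1) * ‖f x‖ := by
        rw [hg_def]
        simp only [norm_smul,
          Complex.norm_cpow_eq_rpow_re_of_pos hxpos, Complex.sub_re, Complex.one_re]
      rw [h1, hU_def, hV_def]
      simp only [Set.indicator_of_mem hx1]
      rw [← ENNReal.ofReal_mul (Real.rpow_nonneg hxpos.le _)]
      congr 1
      rw [← mul_assoc, ← Real.rpow_add hxpos]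
      congr 2
      rw [ha_def]; ring
    · have hf0 : f x = 0 := hsupp x hx1
      simp [hg_def, hf0, hU_def, hV_def, Set.indicator_of_notMem hx1]
  -- the L² norm of U
  have hU2 : ∫⁻ x, U x ^ (2 : ℝ) ∂μ = ENNReal.ofReal (1 / (2 * a)) := by
    have hptU : ∀ x : ℝ, U x ^ (2 : ℝ) =
        (Set.Ioc (0 : ℝ) 1).indicator (fun x => ENNReal.ofReal (x ^ (2 * a - 1))) x := by
      intro x
      by_cases hx1 : x ∈ Set.Ioc (0 : ℝ) 1
      · rw [hU_def]
        simp only [Set.indicator_of_mem hx1]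
        rw [ENNReal.ofReal_rpow_of_nonneg (Real.rpow_nonneg hx1.1.le _) (by norm_num)]
        congr 1
        rw [← Real.rpow_mul hx1.1.le]
        ring_nf
      · rw [hU_def]
        simp only [Set.indicator_of_notMem hx1]
        rw [ENNReal.zero_rpow_of_pos (by norm_num)]
    simp only [hptU]
    rw [hμ, lintegral_indicator measurableSet_Ioc, Measure.restrict_restrict measurableSet_Ioc,
      Set.inter_eq_left.mpr (Set.Ioc_subset_Ioi_self)]
    have hInt : IntegrableOn (fun x : ℝ => x ^ (2 * a - 1)) (Set.Ioc (0 : ℝ) 1) := by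
      rw [← intervalIntegrable_iff_integrableOn_Ioc_of_le zero_le_one]
      exact intervalIntegral.intervalIntegrable_rpow' (by linarith)
    rw [← ofReal_integral_eq_lintegral_ofReal hInt ?_]
    · congr 1
      rw [← intervalIntegral.integral_of_le zero_le_one]
      rw [integral_rpow (Or.inl (by linarith))]
      have h2a : 2 * a - 1 + 1 = 2 * a := by ring
      rw [h2a, Real.one_rpow, Real.zero_rpow (by positivity)]
      norm_num
    · filter_upwards [ae_restrict_mem measurableSet_Ioc] with x hx
      exact Real.rpow_nonneg hx.1.le _
  -- the L² norm of V
  have hC2 : (0 : ℝ) ≤ ∫ x in Set.Ioi (0 : ℝ), ‖f x‖ ^ 2 * x ^ (-2 * θ - 1) := by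
    refine integral_nonneg_of_ae ?_
    filter_upwards [ae_restrict_mem measurableSet_Ioi] with x hx
    exact mul_nonneg (by positivity) (Real.rpow_nonneg (le_of_lt hx) _)
  have hV2 : ∫⁻ x, V x ^ (2 : ℝ) ∂μ =
      ENNReal.ofReal (∫ x in Set.Ioi (0 : ℝ), ‖f x‖ ^ 2 * x ^ (-2 * θ - 1)) := by
    have hptV : ∀ᵐ x ∂μ, V x ^ (2 : ℝ) = ENNReal.ofReal (‖f x‖ ^ 2 * x ^ (-2 * θ - 1)) := by
      rw [hμ]
      filter_upwards [ae_restrict_mem measurableSet_Ioi] with x hx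
      have hxpos : (0 : ℝ) < x := hx
      rw [hV_def]
      rw [ENNReal.ofReal_rpow_of_nonneg
        (mul_nonneg (Real.rpow_nonneg hxpos.le _) (norm_nonneg _)) (by norm_num)]
      congr 1
      rw [Real.mul_rpow (Real.rpow_nonneg hxpos.le _) (norm_nonneg _),
        ← Real.rpow_mul hxpos.le,
        show ((-θ - 1 / 2) * 2 : ℝ) = -2 * θ - 1 by ring, mul_comm]
      congr 1
      rw [show (2 : ℝ) = ((2 : ℕ) : ℝ) by norm_num, Real.rpow_natCast]
    rw [lintegral_congr_ae hptV, ← ofReal_integral_eq_lintegral_ofReal hint ?_]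
    filter_upwards [ae_restrict_mem measurableSet_Ioi] with x hx
    exact mul_nonneg (by positivity) (Real.rpow_nonneg (le_of_lt hx) _)
  -- Cauchy–Schwarz
  have hCS := ENNReal.lintegral_mul_le_Lp_mul_Lq μ
    (Real.HolderConjugate.two_two : Real.HolderConjugate 2 2) hUm hVm
  have hA : ∫⁻ x, ENNReal.ofReal ‖g x‖ ∂μ ≤
      ENNReal.ofReal (1 / (2 * a)) ^ (1 / 2 : ℝ) *
        ENNReal.ofReal (∫ x in Set.Ioi (0 : ℝ), ‖f x‖ ^ 2 * x ^ (-2 * θ - 1)) ^ (1 / 2 : ℝ) := by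
    rw [lintegral_congr_ae hUV]
    rw [← hU2, ← hV2]
    exact hCS
  have hBfin : (ENNReal.ofReal (1 / (2 * a)) ^ (1 / 2 : ℝ) *
      ENNReal.ofReal (∫ x in Set.Ioi (0 : ℝ), ‖f x‖ ^ 2 * x ^ (-2 * θ - 1)) ^ (1 / 2 : ℝ)) ≠ ⊤ := by
    apply ENNReal.mul_ne_top
    · exact (ENNReal.rpow_lt_top_of_nonneg (by norm_num) ENNReal.ofReal_ne_top).ne
    · exact (ENNReal.rpow_lt_top_of_nonneg (by norm_num) ENNReal.ofReal_ne_top).ne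
  have hconv : MellinConvergent f s := by
    refine ⟨hgm, ?_⟩
    rw [hasFiniteIntegral_iff_norm]
    exact lt_of_le_of_lt hA (lt_top_iff_ne_top.mpr hBfin)
  refine ⟨hconv, ?_⟩
  have hnorm : ‖mellin f s‖ ≤ (∫⁻ x, ENNReal.ofReal ‖g x‖ ∂μ).toReal :=
    norm_integral_le_lintegral_norm g
  have htoReal : (∫⁻ x, ENNReal.ofReal ‖g x‖ ∂μ).toReal ≤
      (1 / (2 * a)) ^ (1 / 2 : ℝ) *
        (∫ x in Set.Ioi (0 : ℝ), ‖f x‖ ^ 2 * x ^ (-2 * θ - 1)) ^ (1 / 2 : ℝ) := by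
    have := ENNReal.toReal_mono hBfin hA
    refine le_trans this (le_of_eq ?_)
    rw [ENNReal.toReal_mul, ← ENNReal.toReal_rpow, ← ENNReal.toReal_rpow,
      ENNReal.toReal_ofReal (by positivity), ENNReal.toReal_ofReal hC2]
  refine le_trans hnorm (le_trans htoReal (le_of_eq ?_))
  congr 1
  · rw [Real.rpow_neg (by positivity : (0:ℝ) ≤ 2 * a), one_div,
      Real.inv_rpow (by positivity : (0:ℝ) ≤ 2 * a)]
  · rw [Real.sqrt_eq_rpow]
end

section
/- Let θ ∈ ℝ and let f : ℝ → ℂ be measurable with f(x) = 0 for all x ∉ (0,1], and suppose ∫_{x ∈ (0,∞)} ‖f(x)‖² · x^{−2θ−1} dx < ∞. Then the Mellin transform s ↦ M f(s) is complex differentiable (holomorphic) at every point s of the open half-plane {s ∈ ℂ : Re s > −θ}. -/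
open MeasureTheory Set

open Filter Complex


lemma aux_log_bound {ε : ℝ} (hε : 0 < ε) {t : ℝ} (ht : t ∈ Set.Ioc (0:ℝ) 1) :
    |Real.log t| ≤ t ^ (-ε) / ε := by
  have h0 := ht.1
  have h1 : Real.log t ≤ 0 := Real.log_nonpos h0.le ht.2
  rw [abs_of_nonpos h1]
  have h2 : Real.log (t ^ (-ε)) ≤ t ^ (-ε) - 1 :=
    Real.log_le_sub_one_of_pos (Real.rpow_pos_of_pos h0 _)
  rw [Real.log_rpow h0] at h2
  rw [le_div_iff₀ hε]
  nlinarith [h2]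

lemma aux_amgm (θ : ℝ) (f : ℝ → ℂ) {t : ℝ} (ht : 0 < t) (q : ℝ) :
    t ^ (q - θ - 1) * ‖f t‖ ≤ (‖f t‖ ^ 2 * t ^ (-2 * θ - 1) + t ^ (2 * q - 1)) / 2 := by
  have h1 : t ^ (q - θ - 1) = t ^ (-θ - 1/2) * t ^ (q - 1/2) := by
    rw [← Real.rpow_add ht]; ring_nf
  have e1 : (-θ - 1/2) * ((2:ℕ):ℝ) = -2*θ - 1 := by push_cast; ring
  have e2 : (q - 1/2) * ((2:ℕ):ℝ) = 2*q - 1 := by push_cast; ring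
  have ha2 : (‖f t‖ * t ^ (-θ - 1/2)) ^ 2 = ‖f t‖ ^ 2 * t ^ (-2 * θ - 1) := by
    rw [mul_pow, ← Real.rpow_natCast (t ^ (-θ - 1/2)) 2, ← Real.rpow_mul ht.le, e1]
  have hb2 : (t ^ (q - 1/2)) ^ 2 = t ^ (2 * q - 1) := by
    rw [← Real.rpow_natCast (t ^ (q - 1/2)) 2, ← Real.rpow_mul ht.le, e2]
  have := two_mul_le_add_sq (‖f t‖ * t ^ (-θ - 1/2)) (t ^ (q - 1/2))
  rw [ha2, hb2] at this
  rw [h1]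
  nlinarith [this]

lemma aux_bound_int (θ : ℝ) (f : ℝ → ℂ)
    (hint : IntegrableOn (fun x : ℝ => ‖f x‖ ^ 2 * x ^ (-2 * θ - 1)) (Set.Ioi 0)) {p : ℝ}
    (hp : -1 < p) :
    IntegrableOn (fun t : ℝ =>
      Set.indicator (Set.Ioc (0:ℝ) 1) (fun t => ‖f t‖ ^ 2 * t ^ (-2 * θ - 1) + t ^ p) t)
      (Set.Ioi 0) := by
  have h_rpow : IntegrableOn (fun t : ℝ => t ^ p) (Set.Ioc 0 1) := by
    rw [← intervalIntegrable_iff_integrableOn_Ioc_of_le zero_le_one]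
    exact intervalIntegral.intervalIntegrable_rpow' hp
  have h1 : IntegrableOn (fun t : ℝ => ‖f t‖ ^ 2 * t ^ (-2 * θ - 1) + t ^ p) (Set.Ioc 0 1) :=
    (hint.mono_set Set.Ioc_subset_Ioi_self).add h_rpow
  exact (h1.integrable_indicator measurableSet_Ioc).integrableOn

/-- If `f` is measurable, supported in `(0,1]`, and lies in the weighted space
`x^θ L²((0,∞), dx/x)`, then its Mellin transform is holomorphic on the half-plane
`Re s > -θ`. -/
theorem mellin_holomorphic_of_weighted_L2 (θ : ℝ) (f : ℝ → ℂ) (hmeas : Measurable f)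
    (hsupp : ∀ x : ℝ, x ∉ Set.Ioc (0 : ℝ) 1 → f x = 0)
    (hint : IntegrableOn (fun x : ℝ => ‖f x‖ ^ 2 * x ^ (-2 * θ - 1)) (Set.Ioi 0)) :
    ∀ s : ℂ, -θ < s.re → DifferentiableAt ℂ (mellin f) s := by
  intro s hσ
  set ε : ℝ := (s.re + θ) / 3 with hεdef
  have hε : 0 < ε := by rw [hεdef]; linarith
  set F : ℂ → ℝ → ℂ := fun z t => (t : ℂ) ^ (z - 1) • f t with hF
  set F' : ℂ → ℝ → ℂ := fun z t => ((t : ℂ) ^ (z - 1) * Real.log t) • f t with hF'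
  have hcpow : ∀ z : ℂ, AEStronglyMeasurable (fun t : ℝ => (t : ℂ) ^ (z - 1))
      (volume.restrict (Set.Ioi 0)) := fun z =>
    ContinuousOn.aestronglyMeasurable (continuousOn_of_forall_continuousAt fun t ht =>
      continuousAt_ofReal_cpow_const _ _ (Or.inr (ne_of_gt ht))) measurableSet_Ioi
  have hfm : AEStronglyMeasurable f (volume.restrict (Set.Ioi 0)) :=
    hmeas.aestronglyMeasurable.restrict
  have h1 : ∀ᶠ z : ℂ in nhds s, AEStronglyMeasurable (F z) (volume.restrict (Set.Ioi 0)) :=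
    Filter.Eventually.of_forall fun z => (hcpow z).smul hfm
  -- integrability of F s
  have h2 : IntegrableOn (F s) (Set.Ioi 0) := by
    refine Integrable.mono' (aux_bound_int θ f hint (p := 2 * (s.re + θ) - 1) (by linarith))
      ((hcpow s).smul hfm) ?_
    refine (ae_restrict_mem measurableSet_Ioi).mono fun t ht => ?_
    by_cases htt : t ∈ Set.Ioc (0:ℝ) 1
    · rw [Set.indicator_of_mem htt]
      have hnorm : ‖F s t‖ = t ^ (s.re - 1) * ‖f t‖ := by
        rw [hF, norm_smul,
          Complex.norm_cpow_eq_rpow_re_of_pos htt.1, Complex.sub_re, Complex.one_re]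
      rw [hnorm]
      have := aux_amgm θ f htt.1 (s.re + θ)
      have hnn : (0:ℝ) ≤ ‖f t‖ ^ 2 * t ^ (-2 * θ - 1) + t ^ (2 * (s.re + θ) - 1) := by
        have := Real.rpow_nonneg htt.1.le (-2*θ-1)
        have := Real.rpow_nonneg htt.1.le (2*(s.re+θ)-1)
        positivity
      have heq : s.re + θ - θ - 1 = s.re - 1 := by ring
      rw [heq] at this
      linarith
    · rw [Set.indicator_of_notMem htt]
      simp [hF, hsupp t htt]
  have h3 : AEStronglyMeasurable (F' s) (volume.restrict (Set.Ioi 0)) :=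
    ((hcpow s).mul ((Complex.measurable_ofReal.comp
      Real.measurable_log).aestronglyMeasurable.restrict)).smul hfm
  set bound : ℝ → ℝ := fun t => (1/ε) *
    Set.indicator (Set.Ioc (0:ℝ) 1) (fun t => ‖f t‖ ^ 2 * t ^ (-2 * θ - 1) + t ^ (2 * ε - 1)) t
    with hbd
  have h4 : ∀ᵐ t : ℝ ∂volume.restrict (Set.Ioi 0),
      ∀ z : ℂ, z ∈ Metric.ball s ε → ‖F' z t‖ ≤ bound t := by
    refine (ae_restrict_mem measurableSet_Ioi).mono fun t _ z hz => ?_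
    by_cases htt : t ∈ Set.Ioc (0:ℝ) 1
    · have ht0 := htt.1
      have hzre : s.re - ε ≤ z.re := by
        have h1' : |z.re - s.re| ≤ ‖z - s‖ := by
          simpa [Complex.sub_re] using Complex.abs_re_le_norm (z - s)
        rw [Metric.mem_ball, Complex.dist_eq] at hz
        have := abs_lt.mp (h1'.trans_lt hz)
        linarith [this.1]
      have hnorm : ‖F' z t‖ = t ^ (z.re - 1) * |Real.log t| * ‖f t‖ := by
        rw [hF', norm_smul, norm_mul,
          Complex.norm_cpow_eq_rpow_re_of_pos ht0, Complex.sub_re, Complex.one_re,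
          Complex.norm_real, Real.norm_eq_abs]
      have step1 : t ^ (z.re - 1) ≤ t ^ (s.re - ε - 1) :=
        Real.rpow_le_rpow_of_exponent_ge ht0 htt.2 (by linarith)
      have step2 : |Real.log t| ≤ t ^ (-ε) / ε := aux_log_bound hε htt
      have hmerge : t ^ (s.re - ε - 1) * (t ^ (-ε) / ε) = (1/ε) * t ^ (ε - θ - 1) := by
        rw [div_eq_mul_one_div, ← mul_assoc, ← Real.rpow_add ht0]
        have : s.re - ε - 1 + -ε = ε - θ - 1 := by rw [hεdef]; ring
        rw [this]; ring
      have amgm := aux_amgm θ f ht0 ε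
      calc ‖F' z t‖ = t ^ (z.re - 1) * |Real.log t| * ‖f t‖ := hnorm
        _ ≤ t ^ (s.re - ε - 1) * (t ^ (-ε) / ε) * ‖f t‖ := by
            have hl : (0:ℝ) ≤ |Real.log t| := abs_nonneg _
            have hr : (0:ℝ) ≤ t ^ (s.re - ε - 1) := Real.rpow_nonneg ht0.le _
            have hf0 : (0:ℝ) ≤ ‖f t‖ := norm_nonneg _
            have hrz : (0:ℝ) ≤ t ^ (z.re - 1) := Real.rpow_nonneg ht0.le _
            exact mul_le_mul (mul_le_mul step1 step2 hl hr) le_rfl hf0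
              (mul_nonneg hr (div_nonneg (Real.rpow_nonneg ht0.le _) hε.le))
        _ = (1/ε) * (t ^ (ε - θ - 1) * ‖f t‖) := by rw [hmerge]; ring
        _ ≤ (1/ε) * ((‖f t‖ ^ 2 * t ^ (-2 * θ - 1) + t ^ (2 * ε - 1)) / 2) := by
            have h1ε : (0:ℝ) ≤ 1/ε := by positivity
            exact mul_le_mul_of_nonneg_left amgm h1ε
        _ ≤ bound t := by
            rw [hbd]
            simp only [Set.indicator_of_mem htt]
            have hnn1 : (0:ℝ) ≤ ‖f t‖ ^ 2 * t ^ (-2 * θ - 1) :=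
              mul_nonneg (by positivity) (Real.rpow_nonneg ht0.le _)
            have hnn2 : (0:ℝ) ≤ t ^ (2 * ε - 1) := Real.rpow_nonneg ht0.le _
            have h1ε : (0:ℝ) ≤ 1/ε := by positivity
            nlinarith
    · rw [hbd]
      simp [hF', hsupp t htt, Set.indicator_of_notMem htt]
  have h5 : Integrable bound (volume.restrict (Set.Ioi 0)) :=
    (aux_bound_int θ f hint (p := 2 * ε - 1) (by linarith)).const_mul _
  have h6 : ∀ᵐ t : ℝ ∂volume.restrict (Set.Ioi 0),
      ∀ z : ℂ, z ∈ Metric.ball s ε → HasDerivAt (fun w : ℂ => F w t) (F' z t) z := by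
    refine (ae_restrict_mem measurableSet_Ioi).mono fun t ht z _ => ?_
    have ht' : (t : ℂ) ≠ 0 := Complex.ofReal_ne_zero.mpr (ne_of_gt ht)
    have u1 : HasDerivAt (fun w : ℂ => (t : ℂ) ^ (w - 1)) ((t:ℂ) ^ (z - 1) * Real.log t) z := by
      convert ((hasDerivAt_id' z).sub_const 1).const_cpow (Or.inl ht') using 1
      rw [Complex.ofReal_log (le_of_lt ht)]
      ring
    exact u1.smul_const (f t)
  have main := hasDerivAt_integral_of_dominated_loc_of_deriv_le (Metric.ball_mem_nhds s hε) h1 h2 h3 h4 h5 h6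
  exact main.2.differentiableAt
end
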